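/- Let (A, m) be an associative algebra and R : A → A a Rota-Baxter operator of weight zero, i.e. m(R(a), R(b)) = R(m(a, R(b)) + m(R(a), b)) for all a, b. Then the operations a ≺ b := m(a, R(b)) and a ≻ b := m(R(a), b) make A a dendriform algebra. -/
import Mathlib


/-- A Rota-Baxter operator `R` of weight zero on an associative
algebra `(A, m)` induces a dendriform algebra structure on `A` via
`a ≺ b := m a (R b)` and `a ≻ b := m (R a) b`. -/
theorem rotaBaxter_gives_dendriform
    {K A : Type*} [Field K] [AddCommGroup A] [Module K A]
    (m : A →ₗ[K] A →ₗ[K] A)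
    (hassoc : ∀ a b c : A, m (m a b) c = m a (m b c))
    (R : A →ₗ[K] A)
    (hRB : ∀ a b : A, m (R a) (R b) = R (m a (R b) + m (R a) b)) :
    (∀ a b c : A,
        m (m a (R b)) (R c) = m a (R (m b (R c) + m (R b) c))) ∧
    (∀ a b c : A,
        m (m (R a) b) (R c) = m (R a) (m b (R c))) ∧
    (∀ a b c : A,
        m (R (m a (R b) + m (R a) b)) c = m (R a) (m (R b) c)) := by
  refine ⟨fun a b c => ?_, fun a b c => hassoc _ _ _, fun a b c => ?_⟩
  · rw [hassoc, hRB]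
  · rw [← hRB, hassoc]
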